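/- For every policy class Π ⊆ A^S, the supremum over all stochastic MDPs M over (S, A) of the coverability coefficient C^cov(Π; M) equals the spanning capacity 𝔠(Π); in particular this supremum is attained by a deterministic MDP. -/

import Mathlib

open scoped ENNReal

/-- A deterministic MDP over a layered state space. -/
structure DetMDP (S : ℕ → Type) (A : Type) where
  start : S 0
  step : ∀ h : ℕ, S h → A → S (h + 1)

/-- The trajectory of a policy in a deterministic MDP. -/
def DetMDP.traj {S : ℕ → Type} {A : Type} (M : DetMDP S A) (π : ∀ h : ℕ, S h → A) :
    ∀ h : ℕ, S h
  | 0 => M.start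
  | h + 1 => M.step h (M.traj π h) (π h (M.traj π h))

/-- Reachability of a state-action pair at layer `h` by the class `P` in `M`. -/
def Reachable {S : ℕ → Type} {A : Type} (M : DetMDP S A) (P : Set (∀ h : ℕ, S h → A))
    (h : ℕ) (s : S h) (a : A) : Prop :=
  ∃ π ∈ P, M.traj π h = s ∧ π h s = a

/-- Cumulative reachability at layer `h`. -/
noncomputable def Creach {S : ℕ → Type} {A : Type} (M : DetMDP S A)
    (P : Set (∀ h : ℕ, S h → A)) (h : ℕ) : ℕ :=
  Set.ncard {p : S h × A | Reachable M P h p.1 p.2}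

/-- Spanning capacity of `P` with horizon `H`. -/
noncomputable def spanCap (H : ℕ) (S : ℕ → Type) (A : Type)
    (P : Set (∀ h : ℕ, S h → A)) : ℕ :=
  sSup {n : ℕ | ∃ h < H, ∃ M : DetMDP S A, n = Creach M P h}

/-- A stochastic MDP over a layered state space: an initial distribution on layer `0`
and transition kernels between consecutive layers. -/
structure StoMDP (S : ℕ → Type) (A : Type) where
  init : PMF (S 0)
  step : ∀ h : ℕ, S h → A → PMF (S (h + 1))

/-- `M.stateProb π h s` is the probability that the Markov chain induced by running the
policy `π` in the stochastic MDP `M` is at state `s` at layer `h`. -/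
noncomputable def StoMDP.stateProb {S : ℕ → Type} {A : Type} [∀ h, Fintype (S h)]
    (M : StoMDP S A) (π : ∀ h : ℕ, S h → A) : ∀ h : ℕ, S h → ℝ≥0∞
  | 0 => fun s => M.init s
  | h + 1 => fun s' => ∑ s : S h, M.stateProb π h s * M.step h s (π h s) s'

/-- The occupancy measure `d^π_h(s, a) = Pr^π[s_h = s ∧ a_h = a]`. -/
noncomputable def StoMDP.occ {S : ℕ → Type} {A : Type} [∀ h, Fintype (S h)] [DecidableEq A]
    (M : StoMDP S A) (π : ∀ h : ℕ, S h → A) (h : ℕ) (s : S h) (a : A) : ℝ≥0∞ :=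
  M.stateProb π h s * (if π h s = a then 1 else 0)

/-- The coverability coefficient
`C^cov(P; M) = max_{h < H} Σ_{(s,a) ∈ S_h × A} sup_{π ∈ P} d^π_h(s, a)`. -/
noncomputable def Ccov (H : ℕ) {S : ℕ → Type} {A : Type} [∀ h, Fintype (S h)] [Fintype A]
    [DecidableEq A] (M : StoMDP S A) (P : Set (∀ h : ℕ, S h → A)) : ℝ≥0∞ :=
  ⨆ (h : ℕ) (_ : h < H), ∑ p : S h × A, ⨆ (π : ∀ h : ℕ, S h → A) (_ : π ∈ P),
    M.occ π h p.1 p.2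

/-- A deterministic MDP viewed as a stochastic MDP (point-mass initial distribution and
point-mass transition kernels). -/
noncomputable def DetMDP.toSto {S : ℕ → Type} {A : Type} (M : DetMDP S A) : StoMDP S A where
  init := PMF.pure M.start
  step := fun h s a => PMF.pure (M.step h s a)

section Aux

attribute [local instance] Classical.propDecidable

noncomputable def ind (Q : Prop) : ℝ≥0∞ := if Q then 1 else 0

lemma ind_true {Q : Prop} (h : Q) : ind Q = 1 := by simp [ind, h]
lemma ind_false {Q : Prop} (h : ¬ Q) : ind Q = 0 := by simp [ind, h]
lemma ind_le_one (Q : Prop) : ind Q ≤ 1 := by by_cases h : Q <;> simp [ind, h]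
lemma ind_mono {Q R : Prop} (h : Q → R) : ind Q ≤ ind R := by
  by_cases hq : Q
  · rw [ind_true hq, ind_true (h hq)]
  · rw [ind_false hq]; exact zero_le
lemma ind_mul_ind (Q R : Prop) : ind Q * ind R = ind (Q ∧ R) := by
  by_cases hq : Q <;> by_cases hr : R <;> simp [ind, hq, hr]

variable {S : ℕ → Type} {A : Type} [∀ h, Fintype (S h)] [Fintype A] [DecidableEq A]

/-- sum of an indicator of equality -/
lemma sum_mul_ind_eq {α : Type*} [Fintype α] (g : α → ℝ≥0∞) (b : α) :
    ∑ x : α, g x * ind (x = b) = g b := by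
  have : ∀ x : α, g x * ind (x = b) = if x = b then g x else 0 := by
    intro x
    by_cases h : x = b
    · rw [ind_true h, mul_one, if_pos h]
    · rw [ind_false h, mul_zero, if_neg h]
  rw [Finset.sum_congr rfl (fun x _ => this x), Finset.sum_ite_eq' Finset.univ b g,
    if_pos (Finset.mem_univ b)]

lemma sum_ind_eq_mul {α : Type*} [Fintype α] (g : α → ℝ≥0∞) (b : α) :
    ∑ x : α, ind (b = x) * g x = g b := by
  have : ∀ x : α, ind (b = x) * g x = if x = b then g x else 0 := by
    intro x
    by_cases h : x = b
    · rw [ind_true h.symm, one_mul, if_pos h]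
    · rw [ind_false (fun hh => h hh.symm), zero_mul, if_neg h]
  rw [Finset.sum_congr rfl (fun x _ => this x), Finset.sum_ite_eq' Finset.univ b g,
    if_pos (Finset.mem_univ b)]

variable (M : StoMDP S A)

noncomputable def wlayer (h : ℕ) (G : S h × A → S (h + 1)) : ℝ≥0∞ :=
  ∏ p : S h × A, M.step h p.1 p.2 (G p)

lemma sum_pmf (h : ℕ) (s : S h) (a : A) : ∑ y : S (h+1), M.step h s a y = 1 := by
  rw [← tsum_fintype (L := .unconditional _)]; exact (M.step h s a).tsum_coe

lemma wlayer_sum (h : ℕ) : ∑ G : S h × A → S (h + 1), wlayer M h G = 1 := by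
  unfold wlayer
  rw [← Fintype.prod_sum (fun (p : S h × A) (y : S (h+1)) => M.step h p.1 p.2 y)]
  simp [sum_pmf]

lemma wlayer_marg (h : ℕ) (p₀ : S h × A) (q : S (h + 1) → ℝ≥0∞) :
    ∑ G : S h × A → S (h + 1), wlayer M h G * q (G p₀)
      = ∑ y : S (h + 1), M.step h p₀.1 p₀.2 y * q y := by
  have key : ∀ G : S h × A → S (h+1),
      wlayer M h G * q (G p₀)
        = ∏ p : S h × A, (M.step h p.1 p.2 (G p) * if p = p₀ then q (G p) else 1) := by
    intro G
    rw [Finset.prod_mul_distrib]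
    unfold wlayer
    congr 1
    simp [Finset.prod_ite_eq' Finset.univ p₀ (fun p => q (G p))]
  rw [Finset.sum_congr rfl (fun G _ => key G),
    ← Fintype.prod_sum (fun (p : S h × A) (y : S (h+1)) =>
      M.step h p.1 p.2 y * if p = p₀ then q y else 1)]
  rw [Finset.prod_eq_single p₀ (by
      intro p _ hp
      simp only [if_neg hp, mul_one]
      exact sum_pmf M h p.1 p.2)
    (by simp)]
  simp


def updf (f : ∀ j, S j → A → S (j + 1)) (h : ℕ) (G : S h × A → S (h + 1)) :
    ∀ j, S j → A → S (j + 1) :=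
  Function.update f h (fun s a => G (s, a))

lemma updf_self (f : ∀ j, S j → A → S (j + 1)) (h : ℕ) (G : S h × A → S (h + 1)) :
    updf f h G h = fun s a => G (s, a) := Function.update_self h _ f

lemma updf_ne (f : ∀ j, S j → A → S (j + 1)) (h : ℕ) (G : S h × A → S (h + 1))
    {j : ℕ} (hj : j ≠ h) : updf f h G j = f j := Function.update_of_ne hj _ f

noncomputable def EDet : ∀ (_ : ℕ) (_ : (∀ j, S j → A → S (j + 1)) → ℝ≥0∞)
    (_ : ∀ j, S j → A → S (j + 1)), ℝ≥0∞
  | 0, F, f => F f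
  | (k+1), F, f => ∑ G : S k × A → S (k + 1), wlayer M k G * EDet k F (updf f k G)

lemma EDet_mono {F F' : (∀ j, S j → A → S (j + 1)) → ℝ≥0∞} (hFF : ∀ g, F g ≤ F' g) :
    ∀ (k : ℕ) (f : ∀ j, S j → A → S (j + 1)), EDet M k F f ≤ EDet M k F' f
  | 0, f => hFF f
  | (k+1), f => by
    simp only [EDet]
    exact Finset.sum_le_sum fun G _ =>
      mul_le_mul_right (EDet_mono hFF k (updf f k G)) _

lemma EDet_mul_const {F : (∀ j, S j → A → S (j + 1)) → ℝ≥0∞} (c : ℝ≥0∞) :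
    ∀ (k : ℕ) (f : ∀ j, S j → A → S (j + 1)),
      EDet M k (fun g => F g * c) f = EDet M k F f * c
  | 0, f => rfl
  | (k+1), f => by
    simp only [EDet, Finset.sum_mul]
    exact Finset.sum_congr rfl fun G _ => by
      rw [EDet_mul_const c k (updf f k G), mul_assoc]

lemma EDet_sum {ι : Type*} (t : Finset ι) (F : ι → (∀ j, S j → A → S (j + 1)) → ℝ≥0∞) :
    ∀ (k : ℕ) (f : ∀ j, S j → A → S (j + 1)),
      EDet M k (fun g => ∑ i ∈ t, F i g) f = ∑ i ∈ t, EDet M k (F i) f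
  | 0, f => rfl
  | (k+1), f => by
    simp only [EDet]
    rw [Finset.sum_comm]
    exact Finset.sum_congr rfl fun G _ => by
      rw [EDet_sum t F k (updf f k G), Finset.mul_sum]

lemma EDet_const (c : ℝ≥0∞) :
    ∀ (k : ℕ) (f : ∀ j, S j → A → S (j + 1)), EDet M k (fun _ => c) f = c
  | 0, f => rfl
  | (k+1), f => by
    simp only [EDet]
    rw [Finset.sum_congr rfl fun G _ => by rw [EDet_const c k (updf f k G)],
      ← Finset.sum_mul, wlayer_sum, one_mul]

lemma EDet_congr {F F' : (∀ j, S j → A → S (j + 1)) → ℝ≥0∞} :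
    ∀ (k : ℕ) (f : ∀ j, S j → A → S (j + 1))
      (_ : ∀ g, (∀ j, k ≤ j → g j = f j) → F g = F' g),
      EDet M k F f = EDet M k F' f
  | 0, f, hFF => hFF f fun _ _ => rfl
  | (k+1), f, hFF => by
    simp only [EDet]
    refine Finset.sum_congr rfl fun G _ => ?_
    rw [EDet_congr k (updf f k G) (fun g hg => hFF g fun j hj => by
      rw [hg j (Nat.le_of_succ_le hj), updf_ne f k G (by omega)])]

lemma EDet_base {F : (∀ j, S j → A → S (j + 1)) → ℝ≥0∞} {m : ℕ}
    (hF : ∀ g g', (∀ j, j < m → g j = g' j) → F g = F g') :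
    ∀ (k : ℕ) (f f' : ∀ j, S j → A → S (j + 1))
      (_ : ∀ j, k ≤ j → j < m → f j = f' j),
      EDet M k F f = EDet M k F f'
  | 0, f, f', hff => hF f f' fun j hj => hff j (Nat.zero_le j) hj
  | (k+1), f, f', hff => by
    simp only [EDet]
    refine Finset.sum_congr rfl fun G _ => congrArg (wlayer M k G * ·) ?_
    refine EDet_base hF k (updf f k G) (updf f' k G) fun j hj hjm => ?_
    by_cases hjk : j = k
    · subst hjk; rw [updf_self, updf_self]
    · rw [updf_ne f k G hjk, updf_ne f' k G hjk]
      exact hff j (by omega) hjm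

lemma traj_congr (π : ∀ h : ℕ, S h → A) (s0 : S 0) :
    ∀ (k : ℕ) (f f' : ∀ j, S j → A → S (j + 1)) (_ : ∀ j, j < k → f j = f' j),
      (DetMDP.mk s0 f).traj π k = (DetMDP.mk s0 f').traj π k
  | 0, f, f', _ => rfl
  | (k+1), f, f', hff => by
    have ih := traj_congr π s0 k f f' fun j hj => hff j (Nat.lt_succ_of_lt hj)
    simp only [DetMDP.traj, ih, hff k (Nat.lt_succ_self k)]


lemma stateProb_rep (π : ∀ h : ℕ, S h → A) :
    ∀ (h : ℕ) (s : S h) (f₀ : ∀ j, S j → A → S (j + 1)),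
      M.stateProb π h s
        = ∑ s0 : S 0, M.init s0 *
            EDet M h (fun f => ind ((DetMDP.mk s0 f).traj π h = s)) f₀
  | 0, s, f₀ => by
    simp only [StoMDP.stateProb, EDet, DetMDP.traj]
    exact (sum_mul_ind_eq (fun s0 => M.init s0) s).symm
  | (h+1), s', f₀ => by
    have hA : ∀ (s0 : S 0) (G : S h × A → S (h + 1)),
        EDet M h (fun f => ind ((DetMDP.mk s0 f).traj π (h+1) = s')) (updf f₀ h G)
          = ∑ s : S h,
              EDet M h (fun f => ind ((DetMDP.mk s0 f).traj π h = s)) f₀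
                * ind (G (s, π h s) = s') := by
      intro s0 G
      rw [EDet_congr M h (updf f₀ h G)
        (F' := fun f => ∑ s : S h,
          ind ((DetMDP.mk s0 f).traj π h = s) * ind (G (s, π h s) = s'))
        (by
          intro g hg
          have hgh : g h = fun s a => G (s, a) := by rw [hg h le_rfl, updf_self]
          have ht : (DetMDP.mk s0 g).traj π (h+1)
              = G ((DetMDP.mk s0 g).traj π h, π h ((DetMDP.mk s0 g).traj π h)) := by
            simp only [DetMDP.traj]
            rw [hgh]
          rw [ht]
          exact (sum_ind_eq_mul (fun s => ind (G (s, π h s) = s'))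
            ((DetMDP.mk s0 g).traj π h)).symm)]
      rw [EDet_sum M Finset.univ
        (fun (s : S h) f => ind ((DetMDP.mk s0 f).traj π h = s) * ind (G (s, π h s) = s'))
        h (updf f₀ h G)]
      refine Finset.sum_congr rfl fun s _ => ?_
      rw [EDet_mul_const M (ind (G (s, π h s) = s')) h (updf f₀ h G)]
      congr 1
      refine EDet_base M (m := h)
        (fun g g' hgg' => by
          rw [traj_congr π s0 h g g' fun j hj => hgg' j hj])
        h (updf f₀ h G) f₀ (fun j hj hjm => absurd hjm (by omega))
    simp only [StoMDP.stateProb, EDet]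
    have hB : ∀ s0 : S 0,
        (∑ G : S h × A → S (h + 1), wlayer M h G *
          EDet M h (fun f => ind ((DetMDP.mk s0 f).traj π (h+1) = s')) (updf f₀ h G))
        = ∑ s : S h,
            EDet M h (fun f => ind ((DetMDP.mk s0 f).traj π h = s)) f₀
              * M.step h s (π h s) s' := by
      intro s0
      rw [Finset.sum_congr rfl fun G _ => by rw [hA s0 G, Finset.mul_sum]]
      rw [Finset.sum_comm]
      refine Finset.sum_congr rfl fun s _ => ?_
      have : ∀ G : S h × A → S (h + 1),
          wlayer M h G *
            (EDet M h (fun f => ind ((DetMDP.mk s0 f).traj π h = s)) f₀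
              * ind (G (s, π h s) = s'))
          = EDet M h (fun f => ind ((DetMDP.mk s0 f).traj π h = s)) f₀
              * (wlayer M h G * ind (G (s, π h s) = s')) := fun G => by ring
      rw [Finset.sum_congr rfl fun G _ => this G, ← Finset.mul_sum]
      congr 1
      rw [wlayer_marg M h (s, π h s) (fun y => ind (y = s'))]
      exact sum_mul_ind_eq (fun y => M.step h s (π h s) y) s'
    have hB' : ∀ s0 : S 0,
        M.init s0 * (∑ G : S h × A → S (h + 1), wlayer M h G *
          EDet M h (fun f => ind ((DetMDP.mk s0 f).traj π (h+1) = s')) (updf f₀ h G))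
        = ∑ s : S h, M.init s0 *
            (EDet M h (fun f => ind ((DetMDP.mk s0 f).traj π h = s)) f₀
              * M.step h s (π h s) s') := fun s0 => by
      rw [hB s0, Finset.mul_sum]
    have hD : (∑ s0 : S 0,
        M.init s0 * (∑ G : S h × A → S (h + 1), wlayer M h G *
          EDet M h (fun f => ind ((DetMDP.mk s0 f).traj π (h+1) = s')) (updf f₀ h G)))
        = ∑ s : S h, ∑ s0 : S 0, M.init s0 *
            (EDet M h (fun f => ind ((DetMDP.mk s0 f).traj π h = s)) f₀
              * M.step h s (π h s) s') :=
      (Finset.sum_congr rfl fun s0 _ => hB' s0).trans Finset.sum_comm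
    rw [hD]
    refine Finset.sum_congr rfl fun s _ => ?_
    rw [stateProb_rep π h s f₀, Finset.sum_mul]
    exact Finset.sum_congr rfl fun s0 _ => by ring


lemma init_sum : ∑ s0 : S 0, M.init s0 = 1 := by
  rw [← tsum_fintype (L := .unconditional _)]; exact M.init.tsum_coe

lemma ite_eq_ind {p : Prop} [Decidable p] : (if p then (1 : ℝ≥0∞) else 0) = ind p := by
  by_cases h : p <;> simp [ind, h]

end Aux

section Main

attribute [local instance] Classical.propDecidable
set_option linter.unusedSectionVars false

variable {S : ℕ → Type} {A : Type} [∀ h, Fintype (S h)] [Fintype A] [DecidableEq A]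
variable (P : Set (∀ h : ℕ, S h → A)) (H : ℕ)

lemma creach_le_card (M' : DetMDP S A) (h : ℕ) :
    Creach M' P h ≤ Fintype.card (S h × A) := by
  calc Creach M' P h ≤ (Set.univ : Set (S h × A)).ncard :=
        Set.ncard_le_ncard (Set.subset_univ _) Set.finite_univ
    _ = Fintype.card (S h × A) := by rw [Set.ncard_univ, Nat.card_eq_fintype_card]

lemma bddAbove_span :
    BddAbove {n : ℕ | ∃ h < H, ∃ M : DetMDP S A, n = Creach M P h} := by
  refine ⟨(Finset.range H).sup fun h => Fintype.card (S h × A), fun n hn => ?_⟩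
  obtain ⟨h, hh, M', rfl⟩ := hn
  exact le_trans (creach_le_card P M' h)
    (Finset.le_sup (f := fun h => Fintype.card (S h × A)) (Finset.mem_range.mpr hh))

lemma creach_le_spanCap {h : ℕ} (hh : h < H) (M' : DetMDP S A) :
    Creach M' P h ≤ spanCap H S A P :=
  le_csSup (bddAbove_span P H) ⟨h, hh, M', rfl⟩

lemma sum_ind_reachable (M' : DetMDP S A) (h : ℕ) :
    ∑ p : S h × A, ind (Reachable M' P h p.1 p.2) = (Creach M' P h : ℝ≥0∞) := by
  have hset : {p : S h × A | Reachable M' P h p.1 p.2}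
      = ↑(Finset.univ.filter fun p : S h × A => Reachable M' P h p.1 p.2) := by
    ext p; simp
  rw [Creach, hset, Set.ncard_coe_finset]
  rw [Finset.sum_congr rfl fun p _ => (ite_eq_ind (p := Reachable M' P h p.1 p.2)).symm]
  rw [Finset.sum_boole]

lemma occ_le_reach (M : StoMDP S A) {π : ∀ h : ℕ, S h → A} (hπ : π ∈ P) (h : ℕ)
    (s : S h) (a : A) (f₀ : ∀ j, S j → A → S (j + 1)) :
    M.occ π h s a ≤ ∑ s0 : S 0, M.init s0 *
      EDet M h (fun f => ind (Reachable (DetMDP.mk s0 f) P h s a)) f₀ := by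
  rw [StoMDP.occ, ite_eq_ind, stateProb_rep M π h s f₀, Finset.sum_mul]
  refine Finset.sum_le_sum fun s0 _ => ?_
  rw [mul_assoc, ← EDet_mul_const M (ind (π h s = a)) h f₀]
  refine mul_le_mul_right (EDet_mono M (fun g => ?_) h f₀) _
  rw [ind_mul_ind]
  exact ind_mono fun hq => ⟨π, hπ, hq.1, hq.2⟩

lemma sum_reach_le (M : StoMDP S A) {h : ℕ} (hh : h < H)
    (f₀ : ∀ j, S j → A → S (j + 1)) :
    (∑ p : S h × A, ∑ s0 : S 0, M.init s0 *
        EDet M h (fun f => ind (Reachable (DetMDP.mk s0 f) P h p.1 p.2)) f₀)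
      ≤ (spanCap H S A P : ℝ≥0∞) := by
  rw [Finset.sum_comm]
  have h1 : ∀ s0 : S 0,
      (∑ p : S h × A, M.init s0 *
        EDet M h (fun f => ind (Reachable (DetMDP.mk s0 f) P h p.1 p.2)) f₀)
      = M.init s0 * EDet M h
          (fun f => ∑ p : S h × A, ind (Reachable (DetMDP.mk s0 f) P h p.1 p.2)) f₀ := by
    intro s0
    rw [EDet_sum M Finset.univ
      (fun (p : S h × A) f => ind (Reachable (DetMDP.mk s0 f) P h p.1 p.2)) h f₀,
      Finset.mul_sum]
  rw [Finset.sum_congr rfl fun s0 _ => h1 s0]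
  have h2 : ∀ s0 : S 0,
      M.init s0 * EDet M h
          (fun f => ∑ p : S h × A, ind (Reachable (DetMDP.mk s0 f) P h p.1 p.2)) f₀
      ≤ M.init s0 * (spanCap H S A P : ℝ≥0∞) := by
    intro s0
    refine mul_le_mul_right ?_ _
    have := EDet_mono M (F := fun f => ∑ p : S h × A,
        ind (Reachable (DetMDP.mk s0 f) P h p.1 p.2))
      (F' := fun _ => (spanCap H S A P : ℝ≥0∞))
      (fun g => le_trans (le_of_eq (sum_ind_reachable P (DetMDP.mk s0 g) h))
        (Nat.cast_le.mpr (creach_le_spanCap P H hh _))) h f₀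
    exact le_trans this (le_of_eq (EDet_const M _ h f₀))
  calc (∑ s0 : S 0, M.init s0 * EDet M h
          (fun f => ∑ p : S h × A, ind (Reachable (DetMDP.mk s0 f) P h p.1 p.2)) f₀)
      ≤ ∑ s0 : S 0, M.init s0 * (spanCap H S A P : ℝ≥0∞) := Finset.sum_le_sum fun s0 _ => h2 s0
    _ = (spanCap H S A P : ℝ≥0∞) := by rw [← Finset.sum_mul, init_sum, one_mul]

lemma det_stateProb (Md : DetMDP S A) (π : ∀ h : ℕ, S h → A) :
    ∀ (h : ℕ) (s : S h), Md.toSto.stateProb π h s = ind (Md.traj π h = s)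
  | 0, s => by
    simp only [StoMDP.stateProb, DetMDP.toSto, PMF.pure_apply, DetMDP.traj]
    by_cases hs : Md.start = s
    · rw [if_pos hs.symm, ind_true hs]
    · rw [if_neg fun hss => hs hss.symm, ind_false hs]
  | (h+1), s' => by
    simp only [StoMDP.stateProb]
    rw [Finset.sum_congr rfl fun s _ => by rw [det_stateProb Md π h s]]
    rw [sum_ind_eq_mul (fun s => (Md.toSto.step h s (π h s)) s') (Md.traj π h)]
    simp only [DetMDP.toSto, PMF.pure_apply]
    by_cases hs : Md.traj π (h+1) = s'
    · rw [ind_true hs]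
      simp only [DetMDP.traj] at hs
      rw [if_pos hs.symm]
    · rw [ind_false hs]
      simp only [DetMDP.traj] at hs
      rw [if_neg fun hss => hs hss.symm]

lemma det_occ_sup (Md : DetMDP S A) (h : ℕ) (s : S h) (a : A) :
    (⨆ (π : ∀ h : ℕ, S h → A) (_ : π ∈ P), Md.toSto.occ π h s a)
      = ind (Reachable Md P h s a) := by
  apply le_antisymm
  · refine iSup₂_le fun π hπ => ?_
    rw [StoMDP.occ, ite_eq_ind, det_stateProb Md π h s, ind_mul_ind]
    exact ind_mono fun hq => ⟨π, hπ, hq.1, hq.2⟩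
  · by_cases hr : Reachable Md P h s a
    · obtain ⟨π, hπ, h1, h2⟩ := hr
      have : Md.toSto.occ π h s a = 1 := by
        rw [StoMDP.occ, ite_eq_ind, det_stateProb Md π h s, ind_mul_ind,
          ind_true ⟨h1, h2⟩]
      calc ind (Reachable Md P h s a) ≤ 1 := ind_le_one _
        _ = Md.toSto.occ π h s a := this.symm
        _ ≤ _ := le_iSup₂ (f := fun (π : ∀ h : ℕ, S h → A) (_ : π ∈ P) =>
            Md.toSto.occ π h s a) π hπ
    · rw [ind_false hr]; exact zero_le

end Main

/-- For every policy class `P`, the supremum over all stochastic MDPs `M`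
of the coverability coefficient `C^cov(P; M)` equals the spanning capacity `𝔠(P)`;
in particular this supremum is attained by a deterministic MDP. -/
theorem iSup_Ccov_eq_spanCap (H : ℕ) (hH : 1 ≤ H) (S : ℕ → Type) (A : Type)
    [∀ h, Fintype (S h)] [∀ h, Nonempty (S h)] [Fintype A] [DecidableEq A] [Nonempty A]
    (P : Set (∀ h : ℕ, S h → A)) :
    (⨆ M : StoMDP S A, Ccov H M P) = (spanCap H S A P : ℝ≥0∞) ∧
      ∃ M : DetMDP S A, Ccov H M.toSto P = (spanCap H S A P : ℝ≥0∞) := by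
  classical
  have hbdd := bddAbove_span P H
  have hne : {n : ℕ | ∃ h < H, ∃ M : DetMDP S A, n = Creach M P h}.Nonempty :=
    ⟨Creach ⟨Classical.arbitrary (S 0), fun j _ _ => Classical.arbitrary (S (j+1))⟩ P 0,
      0, hH, _, rfl⟩
  obtain ⟨h0, hh0, M0, hM0⟩ := Nat.sSup_mem hne hbdd
  have hspan : spanCap H S A P = Creach M0 P h0 := hM0
  have hatt : Ccov H M0.toSto P = (spanCap H S A P : ℝ≥0∞) := by
    have hdet : Ccov H M0.toSto P = ⨆ (h : ℕ) (_ : h < H), (Creach M0 P h : ℝ≥0∞) := by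
      rw [Ccov]
      refine iSup_congr fun h => iSup_congr fun hh => ?_
      rw [Finset.sum_congr rfl fun p _ => det_occ_sup P M0 h p.1 p.2]
      exact sum_ind_reachable P M0 h
    rw [hdet]
    apply le_antisymm
    · exact iSup₂_le fun h hh => Nat.cast_le.mpr (creach_le_spanCap P H hh M0)
    · have hle2 := le_iSup₂ (f := fun (h : ℕ) (_ : h < H) => (Creach M0 P h : ℝ≥0∞)) h0 hh0
      rw [hspan]
      exact hle2
  have hle : ∀ M : StoMDP S A, Ccov H M P ≤ (spanCap H S A P : ℝ≥0∞) := by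
    intro M
    rw [Ccov]
    refine iSup₂_le fun h hh => ?_
    have f₀ : ∀ j, S j → A → S (j+1) := fun j _ _ => Classical.arbitrary _
    refine le_trans (Finset.sum_le_sum fun p _ => iSup₂_le fun π hπ =>
      occ_le_reach P M hπ h p.1 p.2 f₀) (sum_reach_le P H M hh f₀)
  refine ⟨le_antisymm (iSup_le hle) ?_, M0, hatt⟩
  calc (spanCap H S A P : ℝ≥0∞) = Ccov H M0.toSto P := hatt.symm
    _ ≤ ⨆ M : StoMDP S A, Ccov H M P := le_iSup (fun M => Ccov H M P) M0.toSto
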